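/- Let d ∈ ℕ with d ≥ 1, let x_0 ∈ ℝ^d, and let ζ_0, ζ_1, ζ_2, … be an i.i.d. sequence of standard Gaussian random vectors on ℝ^d. For each t ∈ ℕ let f_t : ℝ^d → ℝ^d and σ_t : ℝ^d → ℝ^{d×d} be measurable, assume σ_0(x_0) is invertible, and assume that for each t ≥ 1 the set {x ∈ ℝ^d : σ_t(x) is not invertible} has Lebesgue measure zero. Define recursively x_{t+1} = f_t(x_t) + σ_t(x_t)ζ_t. Then for every t ≥ 1 the law of x_t is absolutely continuous with respect to Lebesgue measure on ℝ^d; in particular, for every Borel set S_0 ⊂ ℝ^d of Lebesgue measure zero, P(x_t ∈ S_0) = 0. -/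

import Mathlib

open MeasureTheory ProbabilityTheory Matrix

lemma gauss_pi_ac : ∀ (n : ℕ),
    (Measure.pi fun _ : Fin n => gaussianReal 0 1) ≪ (volume : Measure (Fin n → ℝ)) := by
  intro n
  induction n with
  | zero =>
    intro s hs
    rcases Set.eq_empty_or_nonempty s with rfl | ⟨a, ha⟩
    · simp
    · exfalso
      have hsu : s = Set.univ := Set.eq_univ_of_forall fun b => by
        rwa [Subsingleton.elim b a]
      rw [hsu] at hs
      simp [volume_pi, Measure.pi_univ] at hs
  | succ n ih =>
    set e := MeasurableEquiv.piFinSuccAbove (fun _ : Fin (n+1) => ℝ) 0 with he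
    have h1 : MeasurePreserving e (Measure.pi fun _ : Fin (n+1) => gaussianReal 0 1)
        ((gaussianReal 0 1).prod (Measure.pi fun _ : Fin n => gaussianReal 0 1)) :=
      measurePreserving_piFinSuccAbove (fun _ : Fin (n+1) => gaussianReal 0 1) 0
    have h2 : MeasurePreserving e (volume : Measure (Fin (n+1) → ℝ))
        ((volume : Measure ℝ).prod (volume : Measure (Fin n → ℝ))) := by
      have := volume_preserving_piFinSuccAbove (fun _ : Fin (n+1) => ℝ) 0
      rwa [Measure.volume_eq_prod] at this
    rw [← (h1.symm e).map_eq, ← (h2.symm e).map_eq]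
    exact (Measure.AbsolutelyContinuous.prod
      (gaussianReal_absolutelyContinuous 0 one_ne_zero) ih).map
      (MeasurableEquiv.measurable _)

lemma affine_preimage_null {d : ℕ} (c : Fin d → ℝ) (A : Matrix (Fin d) (Fin d) ℝ)
    (hA : IsUnit A.det) (S : Set (Fin d → ℝ)) (hS : volume S = 0) :
    volume ((fun v => c + A.mulVec v) ⁻¹' S) = 0 := by
  have hdet : A.det ≠ 0 := by
    intro h; rw [h] at hA; exact (by simpa using hA : IsUnit (0 : ℝ)).ne_zero rfl
  have h1 : (fun v : Fin d → ℝ => c + A.mulVec v) ⁻¹' S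
      = (Matrix.toLin' A) ⁻¹' ((fun y => c + y) ⁻¹' S) := by
    ext v; simp [Matrix.toLin'_apply]
  rw [h1, Measure.addHaar_preimage_linearMap volume
    (by rwa [LinearMap.det_toLin'] : LinearMap.det (Matrix.toLin' A) ≠ 0)]
  rw [measure_preimage_add volume c S, hS, mul_zero]

def chiAux {d : ℕ} (x₀ : Fin d → ℝ) (f : ℕ → (Fin d → ℝ) → (Fin d → ℝ))
    (σ : ℕ → (Fin d → ℝ) → Matrix (Fin d) (Fin d) ℝ) :
    ℕ → (ℕ → Fin d → ℝ) → (Fin d → ℝ)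
  | 0, _ => x₀
  | (t+1), z => f t (chiAux x₀ f σ t z) + (σ t (chiAux x₀ f σ t z)).mulVec (z t)

lemma chiAux_congr {d : ℕ} (x₀ : Fin d → ℝ) (f : ℕ → (Fin d → ℝ) → (Fin d → ℝ))
    (σ : ℕ → (Fin d → ℝ) → Matrix (Fin d) (Fin d) ℝ) :
    ∀ (t : ℕ) (z z' : ℕ → Fin d → ℝ), (∀ i < t, z i = z' i) →
      chiAux x₀ f σ t z = chiAux x₀ f σ t z' := by
  intro t
  induction t with
  | zero => intro z z' _; rfl
  | succ n ih =>
    intro z z' h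
    have h1 : chiAux x₀ f σ n z = chiAux x₀ f σ n z' := ih z z' fun i hi => h i (by omega)
    simp only [chiAux, h1, h n (by omega)]

lemma measurable_mulVec_comp {d : ℕ} {α : Type*} [MeasurableSpace α]
    {A : α → Matrix (Fin d) (Fin d) ℝ} {v : α → Fin d → ℝ}
    (hA : Measurable fun a (i j : Fin d) => A a i j) (hv : Measurable v) :
    Measurable fun a => (A a).mulVec (v a) := by
  apply measurable_pi_lambda
  intro i
  have : (fun a => (A a).mulVec (v a) i) = fun a => ∑ j, A a i j * v a j := by
    funext a; simp [Matrix.mulVec, dotProduct]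
  rw [this]
  exact Finset.measurable_sum _ fun j _ =>
    (((measurable_pi_apply j).comp ((measurable_pi_apply i).comp hA))).mul
      ((measurable_pi_apply j).comp hv)

lemma measurable_chiAux {d : ℕ} (x₀ : Fin d → ℝ) {f : ℕ → (Fin d → ℝ) → (Fin d → ℝ)}
    {σ : ℕ → (Fin d → ℝ) → Matrix (Fin d) (Fin d) ℝ}
    (hf : ∀ t, Measurable (f t))
    (hσm : ∀ t, Measurable fun (x : Fin d → ℝ) (i j : Fin d) => σ t x i j) :
    ∀ t, Measurable (chiAux x₀ f σ t) := by
  intro t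
  induction t with
  | zero => exact measurable_const
  | succ n ih =>
    exact ((hf n).comp ih).add
      (measurable_mulVec_comp ((hσm n).comp ih) (measurable_pi_apply n))

/-- For the stochastic recursion `x_{t+1} = f_t(x_t) + σ_t(x_t) ζ_t` driven by i.i.d.
standard Gaussian vectors, with `σ₀(x₀)` invertible and each `σ_t` (t ≥ 1) invertible
outside a Lebesgue-null set, the law of `x_t` for `t ≥ 1` is absolutely continuous w.r.t.
Lebesgue measure; in particular `x_t` hits every Lebesgue-null Borel set with
probability zero. -/
theorem stmt_5 (d : ℕ) (hd : 1 ≤ d) (x₀ : Fin d → ℝ)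
    {Ω : Type*} [MeasurableSpace Ω] (P : Measure Ω) [IsProbabilityMeasure P]
    (ζ : ℕ → Ω → (Fin d → ℝ)) (hζm : ∀ t, Measurable (ζ t))
    (hζlaw : ∀ t, Measure.map (ζ t) P = Measure.pi fun _ : Fin d => gaussianReal 0 1)
    (hζindep : iIndepFun ζ P)
    (f : ℕ → (Fin d → ℝ) → (Fin d → ℝ)) (hf : ∀ t, Measurable (f t))
    (σ : ℕ → (Fin d → ℝ) → Matrix (Fin d) (Fin d) ℝ)
    (hσm : ∀ t, Measurable fun (x : Fin d → ℝ) (i j : Fin d) => σ t x i j)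
    (hσ0 : IsUnit (σ 0 x₀).det)
    (hσt : ∀ t : ℕ, 1 ≤ t → volume {x : Fin d → ℝ | ¬ IsUnit (σ t x).det} = 0)
    (x : ℕ → Ω → (Fin d → ℝ))
    (hx0 : ∀ ω, x 0 ω = x₀)
    (hxrec : ∀ t ω, x (t + 1) ω = f t (x t ω) + (σ t (x t ω)).mulVec (ζ t ω)) :
    ∀ t : ℕ, 1 ≤ t →
      (Measure.map (x t) P).AbsolutelyContinuous volume ∧
        ∀ S₀ : Set (Fin d → ℝ), MeasurableSet S₀ → volume S₀ = 0 →
          P {ω | x t ω ∈ S₀} = 0 := by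
  -- x t is a measurable function of the noise sequence
  have hxchi : ∀ t ω, x t ω = chiAux x₀ f σ t (fun i => ζ i ω) := by
    intro t
    induction t with
    | zero => intro ω; rw [hx0]; rfl
    | succ n ih => intro ω; rw [hxrec, ih]; rfl
  have hζjoint : Measurable fun ω (i : ℕ) => ζ i ω :=
    measurable_pi_lambda _ fun i => hζm i
  have hxm : ∀ t, Measurable (x t) := by
    intro t
    have : x t = (chiAux x₀ f σ t) ∘ (fun ω i => ζ i ω) := funext fun ω => hxchi t ω
    rw [this]
    exact (measurable_chiAux x₀ hf hσm t).comp hζjoint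
  -- independence of x t and ζ t
  have hxind : ∀ t, IndepFun (x t) (ζ t) P := by
    intro t
    have hdisj : Disjoint (Finset.range t) ({t} : Finset ℕ) := by simp
    have h := hζindep.indepFun_finset (Finset.range t) {t} hdisj hζm
    set Φ : ((i : (Finset.range t : Finset ℕ)) → Fin d → ℝ) → Fin d → ℝ :=
      fun g => chiAux x₀ f σ t
        (fun i => if h : i ∈ Finset.range t then g ⟨i, h⟩ else 0) with hΦ
    set Ψ : ((i : ({t} : Finset ℕ)) → Fin d → ℝ) → Fin d → ℝ :=
      fun g => g ⟨t, by simp⟩ with hΨ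
    have hΦm : Measurable Φ := by
      apply (measurable_chiAux x₀ hf hσm t).comp
      apply measurable_pi_lambda
      intro i
      by_cases hi : i ∈ Finset.range t
      · simpa [hi] using measurable_pi_apply (⟨i, hi⟩ : (Finset.range t : Finset ℕ))
      · simpa [hi] using measurable_const
    have hΨm : Measurable Ψ := measurable_pi_apply _
    have hcomp := h.comp hΦm hΨm
    have hxeq : Φ ∘ (fun ω (i : (Finset.range t : Finset ℕ)) => ζ i ω) = x t := by
      funext ω
      show chiAux x₀ f σ t _ = x t ω
      rw [hxchi t ω]
      apply chiAux_congr
      intro i hi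
      simp [Finset.mem_range.mpr hi]
    have hζeq : Ψ ∘ (fun ω (i : ({t} : Finset ℕ)) => ζ i ω) = ζ t := rfl
    rwa [hxeq, hζeq] at hcomp
  -- key step lemma
  have key : ∀ (t : ℕ),
      (∀ᵐ y ∂(Measure.map (x t) P), IsUnit (σ t y).det) →
      (Measure.map (x (t + 1)) P) ≪ (volume : Measure (Fin d → ℝ)) := by
    intro t hae
    have hg : Measurable (fun p : (Fin d → ℝ) × (Fin d → ℝ) =>
        f t p.1 + (σ t p.1).mulVec p.2) :=
      ((hf t).comp measurable_fst).add
        (measurable_mulVec_comp ((hσm t).comp measurable_fst) measurable_snd)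
    have hmap : Measure.map (fun ω => (x t ω, ζ t ω)) P
        = (Measure.map (x t) P).prod (Measure.map (ζ t) P) :=
      (indepFun_iff_map_prod_eq_prod_map_map (hxm t).aemeasurable
        (hζm t).aemeasurable).mp (hxind t)
    have heq : x (t + 1) = (fun p : (Fin d → ℝ) × (Fin d → ℝ) =>
        f t p.1 + (σ t p.1).mulVec p.2) ∘ (fun ω => (x t ω, ζ t ω)) :=
      funext fun ω => hxrec t ω
    refine Measure.AbsolutelyContinuous.mk fun S hS hS0 => ?_
    rw [heq, ← Measure.map_map hg ((hxm t).prodMk (hζm t)), hmap, hζlaw t,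
      Measure.map_apply hg hS, Measure.prod_apply (hg hS)]
    have hzero : ∀ᵐ y ∂(Measure.map (x t) P),
        (Measure.pi fun _ : Fin d => gaussianReal 0 1)
          (Prod.mk y ⁻¹' ((fun p : (Fin d → ℝ) × (Fin d → ℝ) =>
            f t p.1 + (σ t p.1).mulVec p.2) ⁻¹' S)) = 0 := by
      refine hae.mono fun y hy => ?_
      have : Prod.mk y ⁻¹' ((fun p : (Fin d → ℝ) × (Fin d → ℝ) =>
          f t p.1 + (σ t p.1).mulVec p.2) ⁻¹' S)
          = (fun v => f t y + (σ t y).mulVec v) ⁻¹' S := rfl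
      rw [this]
      exact gauss_pi_ac d (affine_preimage_null (f t y) (σ t y) hy S hS0)
    rw [lintegral_congr_ae hzero, lintegral_zero]
  -- main induction
  have main : ∀ t : ℕ, (Measure.map (x (t + 1)) P) ≪ (volume : Measure (Fin d → ℝ)) := by
    intro t
    induction t with
    | zero =>
      apply key 0
      have hx0' : x 0 = fun _ => x₀ := funext hx0
      rw [hx0', Measure.map_const, measure_univ, one_smul]
      rw [ae_dirac_iff]
      · exact hσ0
      · have hdetm : Measurable fun y : Fin d → ℝ => (σ 0 y).det := by
          simp only [Matrix.det_apply']
          exact Finset.measurable_sum _ fun τ _ => measurable_const.mul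
            (Finset.measurable_prod _ fun i _ =>
              (measurable_pi_apply i).comp ((measurable_pi_apply (τ i)).comp (hσm 0)))
        have : {y : Fin d → ℝ | IsUnit (σ 0 y).det}
            = (fun y => (σ 0 y).det) ⁻¹' ({0}ᶜ) := by
          ext y; simp [isUnit_iff_ne_zero]
        rw [this]
        exact hdetm (MeasurableSet.singleton 0).compl
    | succ m ih =>
      apply key (m + 1)
      rw [ae_iff]
      exact ih (hσt (m + 1) (by omega))
  intro t ht
  obtain ⟨n, rfl⟩ : ∃ n, t = n + 1 := ⟨t - 1, by omega⟩
  refine ⟨main n, fun S₀ hS₀ hS₀0 => ?_⟩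
  have : P {ω | x (n + 1) ω ∈ S₀} = Measure.map (x (n + 1)) P S₀ := by
    rw [Measure.map_apply (hxm (n + 1)) hS₀]; rfl
  rw [this]
  exact main n hS₀0
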